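/- Vanishing of Q̃-polynomials: if λ is a partition with λ₁ > n, then Q̃_λ(x₁,...,x_n) = 0. -/

import Mathlib

open MvPolynomial

/-- The `i`-th elementary symmetric polynomial in the variables `{X j : j ∈ S}`,
i.e. `Q̃_i` on the variable set `S`. -/
noncomputable def Qt (S : Finset ℕ) (i : ℕ) : MvPolynomial ℕ ℤ :=
  ∑ t ∈ Finset.powersetCard i S, ∏ j ∈ t, X j

/-- The two-row `Q̃`-polynomial
`Q̃_{i,j} = Q̃_i Q̃_j + 2 ∑_{k=1}^{j} (-1)^k Q̃_{i+k} Q̃_{j-k}` (for `i ≥ j`). -/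
noncomputable def Qtp (S : Finset ℕ) (i j : ℕ) : MvPolynomial ℕ ℤ :=
  Qt S i * Qt S j +
    2 * ∑ k ∈ Finset.Icc 1 j, (-1 : MvPolynomial ℕ ℤ) ^ k * Qt S (i + k) * Qt S (j - k)

/-- Fuel-based Laplace (Pfaffian) recursion for `Q̃_λ` on a list of parts of even
length: `Q̃_ν = ∑_{j} (-1)^{j-1} Q̃_{ν_j,ν_r} Q̃_{ν∖{ν_j,ν_r}}`. -/
noncomputable def Qpf (S : Finset ℕ) : ℕ → List ℕ → MvPolynomial ℕ ℤ
  | 0, _ => 1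
  | fuel + 1, l =>
    if l.length < 2 then 1
    else
      ∑ j ∈ Finset.range (l.length - 1),
        (-1 : MvPolynomial ℕ ℤ) ^ j * Qtp S (l.getD j 0) (l.getLast?.getD 0) *
          Qpf S fuel (l.dropLast.eraseIdx j)

/-- `Q̃_λ` for a partition `λ` (list of parts), padding with a zero part
to make the length even. -/
noncomputable def Qlam (S : Finset ℕ) (l : List ℕ) : MvPolynomial ℕ ℤ :=
  Qpf S (l.length + 1) (if Even l.length then l else l ++ [0])


lemma Qt_zero (S : Finset ℕ) (i : ℕ) (h : S.card < i) : Qt S i = 0 := by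
  unfold Qt
  rw [Finset.powersetCard_eq_empty.mpr h, Finset.sum_empty]

lemma Qtp_zero (S : Finset ℕ) (i j : ℕ) (h : S.card < i) : Qtp S i j = 0 := by
  unfold Qtp
  rw [Qt_zero S i h]
  have : ∀ k ∈ Finset.Icc 1 j,
      (-1 : MvPolynomial ℕ ℤ) ^ k * Qt S (i + k) * Qt S (j - k) = 0 := by
    intro k _
    rw [Qt_zero S (i + k) (by omega), mul_zero, zero_mul]
  rw [Finset.sum_congr rfl this]
  simp

lemma Qpf_zero (n : ℕ) : ∀ (m fuel : ℕ) (l : List ℕ), l.length = 2 * m + 2 →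
    n < l.getD 0 0 → Qpf (Finset.range n) (fuel + m + 1) l = 0 := by
  intro m
  induction m with
  | zero =>
    intro fuel l hl hbig
    show Qpf (Finset.range n) (fuel + 1) l = 0
    rw [Qpf]
    rw [if_neg (by omega)]
    rw [hl]
    rw [Finset.sum_range_one]
    rw [Qtp_zero _ _ _ (by simpa using hbig)]
    ring
  | succ m ih =>
    intro fuel l hl hbig
    have : fuel + (m + 1) + 1 = (fuel + m + 1) + 1 := by ring
    rw [this, Qpf, if_neg (by omega)]
    apply Finset.sum_eq_zero
    intro j hj
    simp only [Finset.mem_range] at hj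
    match j with
    | 0 =>
      rw [Qtp_zero _ _ _ (by simpa using hbig)]
      ring
    | i + 1 =>
      match l, hl with
      | a :: b :: t, hl =>
        have ht : t ≠ [] := by
          intro h; rw [h] at hl
          simp only [List.length_cons, List.length_nil] at hl
          omega
        have hdl : (a :: b :: t).dropLast = a :: (b :: t).dropLast := by
          simp
        rw [hdl, List.eraseIdx_cons_succ]
        rw [ih fuel _ ?_ ?_]
        · ring
        · have h1 : (b :: t).dropLast.length = t.length := by simp
          have h2 : i < (b :: t).dropLast.length := by
            simp at hl hj ⊢; omega
          rw [List.length_cons, List.length_eraseIdx]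
          rw [if_pos h2]
          simp only [List.length_dropLast, List.length_cons] at hl ⊢
          omega
        · simpa using hbig

/-- Vanishing: if `λ₁ > n` then `Q̃_λ(x₁,…,x_n) = 0`. -/
theorem Qtilde_vanishing (n : ℕ) (lam : List ℕ)
    (hlam : List.Pairwise (· ≥ ·) lam) (hbig : n < lam.getD 0 0) :
    Qlam (Finset.range n) lam = 0 := by
  have hne : lam ≠ [] := by
    intro h; rw [h] at hbig; simp at hbig
  unfold Qlam
  by_cases hev : Even lam.length
  · rw [if_pos hev]
    obtain ⟨k, hk⟩ := hev
    have hlp : 0 < lam.length := List.length_pos_iff.mpr hne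
    have hk1 : 1 ≤ k := by omega
    have h1 : lam.length = 2 * (k - 1) + 2 := by omega
    have h2 : lam.length + 1 = (k + 1) + (k - 1) + 1 := by omega
    rw [h2]
    exact Qpf_zero n (k - 1) (k + 1) lam h1 hbig
  · rw [if_neg hev]
    have hodd : Odd lam.length := Nat.not_even_iff_odd.mp hev
    obtain ⟨k, hk⟩ := hodd
    have h1 : (lam ++ [0]).length = 2 * k + 2 := by simp; omega
    have h2 : lam.length + 1 = (k + 1) + k + 1 := by omega
    have h3 : (lam ++ [0]).getD 0 0 = lam.getD 0 0 := by
      rw [List.getD_append]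
      exact List.length_pos_iff.mpr hne
    rw [h2]
    exact Qpf_zero n k (k + 1) (lam ++ [0]) h1 (h3 ▸ hbig)
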